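/- Let A be a finite dimensional unital k-algebra and e ∈ A an idempotent such that eA ≅ Hom_k(Ae, k) as right A-modules. Then the A-A-bimodule Ae ⊗_k eA carries the structure of an algebra object in the monoidal category of A-A-bimodules, with multiplication induced by the pairing eA ⊗_A Ae → k (via the fixed isomorphism eA ≅ (Ae)* and evaluation) and unit A → Ae ⊗_k eA given by a dual basis element. -/

import Mathlib

open TensorProduct

namespace Statement3

variable (k A : Type) [Field k] [Ring A] [Algebra k A] (e : A)

/-- The subspace `Ae ⊆ A` (all `a * e`). -/
noncomputable def Ae : Submodule k A := LinearMap.range (LinearMap.mulRight k e)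

/-- The subspace `eA ⊆ A` (all `e * a`). -/
noncomputable def eA : Submodule k A := LinearMap.range (LinearMap.mulLeft k e)

lemma mem_Ae (a : A) : a * e ∈ Ae k A e := ⟨a, rfl⟩

lemma e_mem_Ae : e ∈ Ae k A e := ⟨1, one_mul e⟩

lemma mem_eA (a : A) : e * a ∈ eA k A e := ⟨a, rfl⟩

lemma mem_eA' (b : A) : e * (b * e) ∈ eA k A e := ⟨b * e, rfl⟩

lemma mem_Ae' (a c : A) : a * (c * e) ∈ Ae k A e :=
  ⟨a * c, by rw [LinearMap.mulRight_apply, mul_assoc]⟩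

lemma mem_eA'' (b a : A) : (e * b) * a ∈ eA k A e :=
  ⟨b * a, by rw [LinearMap.mulLeft_apply, mul_assoc]⟩

lemma mem_eAe_mid (b c : A) : (e * b) * (c * e) ∈ eA k A e :=
  ⟨b * (c * e), by rw [LinearMap.mulLeft_apply, mul_assoc]⟩

set_option linter.unusedSectionVars false

lemma mul_mem_eA (w : ↥(eA k A e)) (y : A) : (w : A) * y ∈ eA k A e := by
  obtain ⟨b, hb⟩ := w.2
  exact ⟨b * y, by simp only [LinearMap.mulLeft_apply] at hb ⊢; rw [← mul_assoc, hb]⟩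

lemma mul_mem_Ae (a : A) (y : ↥(Ae k A e)) : a * (y : A) ∈ Ae k A e := by
  obtain ⟨c, hc⟩ := y.2
  exact ⟨a * c, by simp only [LinearMap.mulRight_apply] at hc ⊢; rw [mul_assoc, hc]⟩

/-- multiplication eA × Ae → eA -/
noncomputable def mulWY : ↥(eA k A e) →ₗ[k] ↥(Ae k A e) →ₗ[k] ↥(eA k A e) :=
  LinearMap.mk₂ k (fun w y => ⟨(w : A) * (y : A), mul_mem_eA k A e w y⟩)
    (fun w w' y => Subtype.ext (by simp [add_mul]))
    (fun c w y => Subtype.ext (by simp [smul_mul_assoc]))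
    (fun w y y' => Subtype.ext (by simp [mul_add]))
    (fun c w y => Subtype.ext (by simp [mul_smul_comm]))

/-- left multiplication of A on Ae -/
noncomputable def lmul : A →ₗ[k] ↥(Ae k A e) →ₗ[k] ↥(Ae k A e) :=
  LinearMap.mk₂ k (fun a y => ⟨a * (y : A), mul_mem_Ae k A e a y⟩)
    (fun a a' y => Subtype.ext (by simp [add_mul]))
    (fun c a y => Subtype.ext (by simp [smul_mul_assoc]))
    (fun a y y' => Subtype.ext (by simp [mul_add]))
    (fun c a y => Subtype.ext (by simp [mul_smul_comm]))

/-- right multiplication of A on eA -/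
noncomputable def rmul : A →ₗ[k] ↥(eA k A e) →ₗ[k] ↥(eA k A e) :=
  LinearMap.mk₂ k (fun a w => ⟨(w : A) * a, mul_mem_eA k A e w a⟩)
    (fun a a' w => Subtype.ext (by simp [mul_add]))
    (fun c a w => Subtype.ext (by simp [mul_smul_comm]))
    (fun a w w' => Subtype.ext (by simp [add_mul]))
    (fun c a w => Subtype.ext (by simp [smul_mul_assoc]))

noncomputable def glueMap :
    (↥(Ae k A e) ⊗[k] ↥(eA k A e)) →ₗ[k]
      (↥(Ae k A e) ⊗[k] ↥(eA k A e)) →ₗ[k]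
      (↥(Ae k A e) ⊗[k] (↥(eA k A e) ⊗[k] ↥(eA k A e))) :=
  TensorProduct.curry <|
    (TensorProduct.map LinearMap.id
        (TensorProduct.map (TensorProduct.lift (mulWY k A e)) LinearMap.id)) ∘ₗ
    (TensorProduct.map LinearMap.id
        (TensorProduct.assoc k ↥(eA k A e) ↥(Ae k A e) ↥(eA k A e)).symm.toLinearMap) ∘ₗ
    (TensorProduct.assoc k ↥(Ae k A e) ↥(eA k A e)
        (↥(Ae k A e) ⊗[k] ↥(eA k A e))).toLinearMap

lemma glueMap_tmul (x : ↥(Ae k A e)) (w : ↥(eA k A e)) (y : ↥(Ae k A e)) (z : ↥(eA k A e)) :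
    glueMap k A e (x ⊗ₜ[k] w) (y ⊗ₜ[k] z) = x ⊗ₜ[k] ((mulWY k A e w y) ⊗ₜ[k] z) := by
  simp [glueMap, TensorProduct.curry_apply, TensorProduct.assoc_tmul,
    TensorProduct.assoc_symm_tmul]

noncomputable def evE (Φ : ↥(eA k A e) ≃ₗ[k] (↥(Ae k A e) →ₗ[k] k)) :
    ↥(eA k A e) →ₗ[k] k :=
  (Φ : ↥(eA k A e) →ₗ[k] (↥(Ae k A e) →ₗ[k] k)).flip ⟨e, e_mem_Ae k A e⟩

noncomputable def mMap (Φ : ↥(eA k A e) ≃ₗ[k] (↥(Ae k A e) →ₗ[k] k)) :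
    (↥(Ae k A e) ⊗[k] (↥(eA k A e) ⊗[k] ↥(eA k A e))) →ₗ[k]
      (↥(Ae k A e) ⊗[k] ↥(eA k A e)) :=
  TensorProduct.map LinearMap.id
    (TensorProduct.lift (LinearMap.mk₂ k (fun w y => (evE k A e Φ w) • y)
      (fun w w' y => by rw [map_add, add_smul])
      (fun c w y => by rw [map_smul, smul_eq_mul, mul_smul])
      (fun w y y' => by rw [smul_add])
      (fun c w y => by rw [smul_comm])))


lemma mMap_tmul (Φ : ↥(eA k A e) ≃ₗ[k] (↥(Ae k A e) →ₗ[k] k))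
    (x : ↥(Ae k A e)) (w y : ↥(eA k A e)) :
    mMap k A e Φ (x ⊗ₜ[k] (w ⊗ₜ[k] y)) = (Φ w ⟨e, e_mem_Ae k A e⟩) • (x ⊗ₜ[k] y) := by
  simp [mMap, evE, TensorProduct.tmul_smul]

section Equiv

variable (Φ : ↥(eA k A e) ≃ₗ[k] (↥(Ae k A e) →ₗ[k] k))
variable (hΦ : ∀ b a c : A,
      Φ ⟨(e * b) * a, mem_eA'' k A e b a⟩ ⟨c * e, mem_Ae k A e c⟩ =
      Φ ⟨e * b, mem_eA k A e b⟩ ⟨a * (c * e), mem_Ae' k A e a c⟩)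

include hΦ

/-- general form of equivariance -/
lemma equiv_gen (a : A) (w : ↥(eA k A e)) (y : ↥(Ae k A e)) :
    Φ (rmul k A e a w) y = Φ w (lmul k A e a y) := by
  obtain ⟨b, hb⟩ := w.2
  obtain ⟨c, hc⟩ := y.2
  simp only [LinearMap.mulLeft_apply] at hb
  simp only [LinearMap.mulRight_apply] at hc
  have h1 : rmul k A e a w = ⟨(e * b) * a, mem_eA'' k A e b a⟩ :=
    Subtype.ext (by simp [rmul, LinearMap.mk₂_apply, hb])
  have h2 : (y : ↥(Ae k A e)) = ⟨c * e, mem_Ae k A e c⟩ := Subtype.ext hc.symm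
  have h3 : w = ⟨e * b, mem_eA k A e b⟩ := Subtype.ext hb.symm
  have h4 : lmul k A e a y = ⟨a * (c * e), mem_Ae' k A e a c⟩ :=
    Subtype.ext (by simp [lmul, LinearMap.mk₂_apply, hc])
  rw [h1, h4, h3, h2]
  exact hΦ b a c

/-- pairing identity: Φ(w·y)(e) = Φ(w)(y), uses idempotence -/
lemma pair_eval (he : IsIdempotentElem e) (w : ↥(eA k A e)) (y : ↥(Ae k A e)) :
    Φ (mulWY k A e w y) ⟨e, e_mem_Ae k A e⟩ = Φ w y := by
  have h1 : mulWY k A e w y = rmul k A e (y : A) w :=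
    Subtype.ext (by simp [mulWY, rmul, LinearMap.mk₂_apply])
  rw [h1, equiv_gen k A e Φ hΦ]
  congr 1
  obtain ⟨c, hc⟩ := y.2
  simp only [LinearMap.mulRight_apply] at hc
  apply Subtype.ext
  simp only [lmul, LinearMap.mk₂_apply]
  rw [← hc, mul_assoc, he]


section BasisLemmas

variable (ι : Type) [Fintype ι] (B : Module.Basis ι k ↥(Ae k A e))

lemma smul_coord_eq (g : ↥(Ae k A e) →ₗ[k] ↥(Ae k A e)) (j : ι) :
    ∑ i, (B.coord j (g (B i))) • (B.coord i) = (B.coord j) ∘ₗ g := by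
  ext y
  simp only [LinearMap.coe_sum, Finset.sum_apply, LinearMap.smul_apply, smul_eq_mul,
    LinearMap.comp_apply]
  conv_rhs => rw [← Module.Basis.sum_repr B y, map_sum, map_sum]
  simp only [map_smul, smul_eq_mul, Module.Basis.coord_apply]
  exact Finset.sum_congr rfl (fun i _ => mul_comm _ _)

lemma central_aux (g : ↥(Ae k A e) →ₗ[k] ↥(Ae k A e)) :
    ∑ i, (g (B i)) ⊗ₜ[k] (Φ.symm (B.coord i)) =
    ∑ i, (B i) ⊗ₜ[k] (Φ.symm ((B.coord i) ∘ₗ g)) := by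
  calc ∑ i, (g (B i)) ⊗ₜ[k] (Φ.symm (B.coord i))
      = ∑ i, (∑ j, (B.coord j (g (B i))) • B j) ⊗ₜ[k] (Φ.symm (B.coord i)) := by
        refine Finset.sum_congr rfl (fun i _ => ?_)
        congr 1
        conv_lhs => rw [← Module.Basis.sum_repr B (g (B i))]
        simp [Module.Basis.coord_apply]
  _ = ∑ i, ∑ j, (B.coord j (g (B i))) • ((B j) ⊗ₜ[k] (Φ.symm (B.coord i))) := by
        simp only [TensorProduct.sum_tmul, ← TensorProduct.smul_tmul']
  _ = ∑ j, ∑ i, (B.coord j (g (B i))) • ((B j) ⊗ₜ[k] (Φ.symm (B.coord i))) :=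
        Finset.sum_comm
  _ = ∑ j, (B j) ⊗ₜ[k] (∑ i, (B.coord j (g (B i))) • Φ.symm (B.coord i)) := by
        simp [TensorProduct.tmul_sum, TensorProduct.tmul_smul]
  _ = ∑ j, (B j) ⊗ₜ[k] (Φ.symm ((B.coord j) ∘ₗ g)) := by
        refine Finset.sum_congr rfl (fun j _ => ?_)
        congr 1
        rw [← smul_coord_eq k A e Φ hΦ ι B g j, map_sum]
        simp

lemma unit_left_aux (x : ↥(Ae k A e)) :
    ∑ i, (Φ (Φ.symm (B.coord i)) x) • B i = x := by
  simp only [LinearEquiv.apply_symm_apply, Module.Basis.coord_apply]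
  exact Module.Basis.sum_repr B x

lemma unit_right_aux (w : ↥(eA k A e)) :
    ∑ i, (Φ w (B i)) • Φ.symm (B.coord i) = w := by
  apply Φ.injective
  rw [map_sum]
  simp only [map_smul, LinearEquiv.apply_symm_apply]
  ext y
  simp only [LinearMap.coe_sum, Finset.sum_apply, LinearMap.smul_apply, smul_eq_mul,
    Module.Basis.coord_apply]
  conv_rhs => rw [← Module.Basis.sum_repr B y, map_sum]
  simp only [map_smul, smul_eq_mul]
  exact Finset.sum_congr rfl (fun i _ => mul_comm _ _)

lemma rmul_symm (a : A) (f : ↥(Ae k A e) →ₗ[k] k) :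
    rmul k A e a (Φ.symm f) = Φ.symm (f ∘ₗ (lmul k A e a)) := by
  apply Φ.injective
  rw [LinearEquiv.apply_symm_apply]
  ext y
  rw [equiv_gen k A e Φ hΦ, LinearEquiv.apply_symm_apply, LinearMap.comp_apply]

end BasisLemmas

end Equiv



/-- Let `A` be a finite dimensional `k`-algebra and `e ∈ A` an idempotent such
that `eA ≅ Hom_k(Ae, k)` as right `A`-modules (the isomorphism `Φ`, right `A`-equivariance
expressed elementwise).  Then the `A`-`A`-bimodule `Ae ⊗_k eA` carries the structure of an
algebra object in the monoidal category of `A`-`A`-bimodules: using the identification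
`(Ae ⊗_k eA) ⊗_A (Ae ⊗_k eA) ≅ Ae ⊗_k (eA·Ae) ⊗_k eA` (the map `glue` below), the
multiplication `m` is induced by the evaluation pairing `eA ⊗_A Ae → k`, `x ⊗ y ↦ Φ(x)(y)`,
and the unit `A → Ae ⊗_k eA` is the bimodule map sending `1` to the dual-basis element
`Σᵢ aᵢ ⊗ Φ⁻¹(aᵢ*)`.  Associativity and unitality hold. -/
theorem statement3 [FiniteDimensional k A] (he : IsIdempotentElem e)
    (Φ : ↥(eA k A e) ≃ₗ[k] (↥(Ae k A e) →ₗ[k] k))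
    -- right A-equivariance of Φ : Φ(x·a)(y) = Φ(x)(a·y)
    (hΦ : ∀ b a c : A,
      Φ ⟨(e * b) * a, mem_eA'' k A e b a⟩ ⟨c * e, mem_Ae k A e c⟩ =
      Φ ⟨e * b, mem_eA k A e b⟩ ⟨a * (c * e), mem_Ae' k A e a c⟩)
    (ι : Type) (_ : Fintype ι) (B : Module.Basis ι k ↥(Ae k A e)) :
    ∃ (glue : (↥(Ae k A e) ⊗[k] ↥(eA k A e)) →ₗ[k]
          (↥(Ae k A e) ⊗[k] ↥(eA k A e)) →ₗ[k]
          (↥(Ae k A e) ⊗[k] (↥(eA k A e) ⊗[k] ↥(eA k A e))))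
      (m : (↥(Ae k A e) ⊗[k] (↥(eA k A e) ⊗[k] ↥(eA k A e))) →ₗ[k]
          (↥(Ae k A e) ⊗[k] ↥(eA k A e)))
      (t₀ : ↥(Ae k A e) ⊗[k] ↥(eA k A e))
      (L R : A →ₗ[k] (↥(Ae k A e) ⊗[k] ↥(eA k A e)) →ₗ[k]
          (↥(Ae k A e) ⊗[k] ↥(eA k A e))),
      -- glue realizes the identification (Ae⊗eA)⊗_A(Ae⊗eA) ≅ Ae ⊗ eAAe ⊗ eA on generators
      (∀ a b c d : A,
        glue ((⟨a * e, mem_Ae k A e a⟩ : ↥(Ae k A e)) ⊗ₜ[k]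
                (⟨e * b, mem_eA k A e b⟩ : ↥(eA k A e)))
             ((⟨c * e, mem_Ae k A e c⟩ : ↥(Ae k A e)) ⊗ₜ[k]
                (⟨e * d, mem_eA k A e d⟩ : ↥(eA k A e))) =
          (⟨a * e, mem_Ae k A e a⟩ : ↥(Ae k A e)) ⊗ₜ[k]
            ((⟨(e * b) * (c * e), mem_eAe_mid k A e b c⟩ : ↥(eA k A e)) ⊗ₜ[k]
              (⟨e * d, mem_eA k A e d⟩ : ↥(eA k A e)))) ∧
      -- the multiplication is induced by the pairing: the middle factor is
      -- evaluated against `e` (equivalently, `eb ⊗ ce ↦ Φ(eb)(ce)`)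
      (∀ (x : ↥(Ae k A e)) (w : ↥(eA k A e)) (y : ↥(eA k A e)),
        m (x ⊗ₜ[k] (w ⊗ₜ[k] y)) =
          (Φ w ⟨e, e_mem_Ae k A e⟩) • (x ⊗ₜ[k] y)) ∧
      -- the unit is the dual-basis (coevaluation) element
      (t₀ = ∑ i, (B i) ⊗ₜ[k] (Φ.symm (B.coord i))) ∧
      -- left and right A-actions on Ae ⊗ eA
      (∀ (a c : A) (y : ↥(eA k A e)),
        L a ((⟨c * e, mem_Ae k A e c⟩ : ↥(Ae k A e)) ⊗ₜ[k] y) =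
          (⟨a * (c * e), mem_Ae' k A e a c⟩ : ↥(Ae k A e)) ⊗ₜ[k] y) ∧
      (∀ (a b : A) (x : ↥(Ae k A e)),
        R a (x ⊗ₜ[k] (⟨e * b, mem_eA k A e b⟩ : ↥(eA k A e))) =
          x ⊗ₜ[k] (⟨(e * b) * a, mem_eA'' k A e b a⟩ : ↥(eA k A e))) ∧
      -- the unit A → Ae ⊗ eA, a ↦ a • t₀, is a bimodule map (centrality of t₀)
      (∀ a : A, L a t₀ = R a t₀) ∧
      -- associativity of the induced multiplication
      (∀ r s t : ↥(Ae k A e) ⊗[k] ↥(eA k A e),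
        m (glue (m (glue r s)) t) = m (glue r (m (glue s t)))) ∧
      -- unitality
      (∀ t : ↥(Ae k A e) ⊗[k] ↥(eA k A e), m (glue t₀ t) = t ∧ m (glue t t₀) = t) := by
  classical
  refine ⟨glueMap k A e, mMap k A e Φ, ∑ i, (B i) ⊗ₜ[k] (Φ.symm (B.coord i)),
    (LinearMap.rTensorHom _).comp (lmul k A e),
    (LinearMap.lTensorHom _).comp (rmul k A e),
    ?_, mMap_tmul k A e Φ, rfl, ?_, ?_, ?_, ?_, ?_⟩
  · intro a b c d
    rw [glueMap_tmul]
    congr 2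
  · intro a c y
    show LinearMap.rTensor _ (lmul k A e a) _ = _
    rw [LinearMap.rTensor_tmul]
    rfl
  · intro a b x
    show LinearMap.lTensor _ (rmul k A e a) _ = _
    rw [LinearMap.lTensor_tmul]
    rfl
  · intro a
    show LinearMap.rTensor _ (lmul k A e a) _ = LinearMap.lTensor _ (rmul k A e a) _
    rw [map_sum, map_sum]
    simp only [LinearMap.rTensor_tmul, LinearMap.lTensor_tmul]
    rw [central_aux k A e Φ hΦ ι B (lmul k A e a)]
    exact Finset.sum_congr rfl (fun i _ => by rw [rmul_symm k A e Φ hΦ a])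
  · intro r s t
    induction r using TensorProduct.induction_on with
    | zero => simp
    | add u v hu hv => simp only [map_add, LinearMap.add_apply, hu, hv]
    | tmul x w =>
      induction s using TensorProduct.induction_on with
      | zero => simp
      | add u v hu hv => simp only [map_add, LinearMap.add_apply, hu, hv]
      | tmul y z =>
        induction t using TensorProduct.induction_on with
        | zero => simp
        | add u v hu hv => simp only [map_add, hu, hv]
        | tmul u v =>
          simp only [glueMap_tmul, mMap_tmul, map_smul, LinearMap.smul_apply]
          exact smul_comm _ _ _
  · intro t
    constructor
    · induction t using TensorProduct.induction_on with
      | zero => simp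
      | add u v hu hv => simp only [map_add, hu, hv]
      | tmul x w =>
        rw [map_sum, LinearMap.sum_apply, map_sum]
        have : ∀ i : ι, mMap k A e Φ (glueMap k A e ((B i) ⊗ₜ[k] Φ.symm (B.coord i))
            (x ⊗ₜ[k] w)) = (Φ (Φ.symm (B.coord i)) x) • ((B i) ⊗ₜ[k] w) := by
          intro i
          rw [glueMap_tmul, mMap_tmul, pair_eval k A e Φ hΦ he]
        rw [Finset.sum_congr rfl (fun i _ => this i)]
        have : ∑ i, (Φ (Φ.symm (B.coord i)) x) • ((B i) ⊗ₜ[k] w) =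
            (∑ i, (Φ (Φ.symm (B.coord i)) x) • B i) ⊗ₜ[k] w := by
          rw [TensorProduct.sum_tmul]
          exact Finset.sum_congr rfl (fun i _ => by rw [TensorProduct.smul_tmul'])
        rw [this, unit_left_aux k A e Φ hΦ ι B x]
    · induction t using TensorProduct.induction_on with
      | zero => simp
      | add u v hu hv => simp only [map_add, LinearMap.add_apply, hu, hv]
      | tmul x w =>
        rw [map_sum, map_sum]
        have : ∀ i : ι, mMap k A e Φ (glueMap k A e (x ⊗ₜ[k] w)
            ((B i) ⊗ₜ[k] Φ.symm (B.coord i))) = (Φ w (B i)) • (x ⊗ₜ[k] Φ.symm (B.coord i)) := by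
          intro i
          rw [glueMap_tmul, mMap_tmul, pair_eval k A e Φ hΦ he]
        rw [Finset.sum_congr rfl (fun i _ => this i)]
        have : ∑ i, (Φ w (B i)) • (x ⊗ₜ[k] Φ.symm (B.coord i)) =
            x ⊗ₜ[k] (∑ i, (Φ w (B i)) • Φ.symm (B.coord i)) := by
          rw [TensorProduct.tmul_sum]
          exact Finset.sum_congr rfl (fun i _ => by rw [TensorProduct.tmul_smul])
        rw [this, unit_right_aux k A e Φ hΦ ι B w]


end Statement3
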